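/- Let G be a finite non-cyclic nilpotent group. Then the enhanced power graph P_E(G) is minimally edge connected if and only if G is a p-group of exponent p for some prime p. -/

import Mathlib

/-- The degree of a vertex: the number of its neighbours. -/
noncomputable def gDeg {V : Type*} (G : SimpleGraph V) (v : V) : ℕ :=
  (G.neighborSet v).ncard

/-- The minimum degree of a graph. -/
noncomputable def minDeg {V : Type*} (G : SimpleGraph V) : ℕ :=
  sInf (Set.range (gDeg G))

/-- The edge connectivity: the minimum size of a set of edges whose removal
disconnects the graph. -/
noncomputable def edgeConn {V : Type*} (G : SimpleGraph V) : ℕ :=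
  sInf {n : ℕ | ∃ S : Set (Sym2 V), S ⊆ G.edgeSet ∧ S.ncard = n ∧
    ¬ (G.deleteEdges S).Connected}

/-- The vertex connectivity: the minimum size of a set of vertices whose removal
disconnects the graph or leaves a single vertex. -/
noncomputable def vertexConn {V : Type*} (G : SimpleGraph V) : ℕ :=
  sInf {n : ℕ | ∃ S : Set V, S.ncard = n ∧ Sᶜ.Nonempty ∧
    (¬ (G.induce Sᶜ).Preconnected ∨ Sᶜ.ncard = 1)}

/-- A graph is minimally edge connected if deleting any edge decreases the
edge connectivity by one. -/
def MinEdgeConnected {V : Type*} (G : SimpleGraph V) : Prop :=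
  ∀ e ∈ G.edgeSet, edgeConn (G.deleteEdges {e}) = edgeConn G - 1

/-- A graph is minimally connected if deleting any edge decreases the
vertex connectivity by one. -/
def MinConnected {V : Type*} (G : SimpleGraph V) : Prop :=
  ∀ e ∈ G.edgeSet, vertexConn (G.deleteEdges {e}) = vertexConn G - 1

/-- The power graph of a group: distinct `x, y` are adjacent iff one is a
natural power of the other. -/
def powerGraph (G : Type*) [Group G] : SimpleGraph G :=
  SimpleGraph.fromRel (fun x y => ∃ m : ℕ, y = x ^ m)

/-- The enhanced power graph of a group: distinct `x, y` are adjacent iff they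
lie in a common cyclic subgroup. -/
def enhancedPowerGraph (G : Type*) [Group G] : SimpleGraph G :=
  SimpleGraph.fromRel
    (fun x y => ∃ z : G, x ∈ Subgroup.zpowers z ∧ y ∈ Subgroup.zpowers z)

/-- The order superpower graph of a group: distinct `x, y` are adjacent iff the
order of one divides the order of the other. -/
def superpowerGraph (G : Type*) [Group G] : SimpleGraph G :=
  SimpleGraph.fromRel (fun x y => orderOf x ∣ orderOf y)


/- ======================== auxiliary machinery ======================== -/

set_option linter.unusedSectionVars false
set_option linter.unreachableTactic false
set_option linter.unusedTactic false
set_option linter.unusedVariables false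
set_option maxHeartbeats 1000000

open Subgroup

section GraphAux
variable {V : Type*} [Fintype V]

omit [Fintype V] in
lemma aux_isolated (Γ : SimpleGraph V) (x w : V) (hw : w ≠ x)
    (h : ∀ u, ¬ Γ.Adj x u) : ¬ Γ.Connected := by
  intro hc
  obtain ⟨wlk⟩ := hc.preconnected x w
  cases wlk with
  | nil => exact hw rfl
  | cons h' p => exact h _ h'

omit [Fintype V] in
lemma aux_extract (Γ : SimpleGraph V) (T : Set (Sym2 V)) (u : V)
    (h : ¬ (Γ.deleteEdges T).Connected) :
    ∃ C : Set V, C.Nonempty ∧ u ∉ C ∧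
      ∀ a ∈ C, ∀ b, b ∉ C → Γ.Adj a b → s(a, b) ∈ T := by
  classical
  set H := Γ.deleteEdges T with hH
  refine ⟨{v | ¬ H.Reachable u v}, ?_, ?_, ?_⟩
  · rw [Set.nonempty_iff_ne_empty]
    intro hemp
    have hall : ∀ v, H.Reachable u v := by
      intro v
      by_contra hv
      have : v ∈ {v | ¬ H.Reachable u v} := hv
      rw [hemp] at this
      exact this
    exact h ((SimpleGraph.connected_iff _).mpr
      ⟨fun a b => (hall a).symm.trans (hall b), ⟨u⟩⟩)
  · exact fun hu => hu (SimpleGraph.Reachable.refl u)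
  · intro a ha b hb hadj
    by_contra hn
    have hub : H.Reachable u b := not_not.mp hb
    have hAdj : H.Adj a b := by
      rw [hH, SimpleGraph.deleteEdges_adj]
      exact ⟨hadj, hn⟩
    exact ha (hub.trans hAdj.symm.reachable)

omit [Fintype V] in
lemma aux_incident_eq (Γ : SimpleGraph V) (x : V) :
    {e | e ∈ Γ.edgeSet ∧ x ∈ e} = (fun w => s(x, w)) '' (Γ.neighborSet x) := by
  ext e
  constructor
  · rintro ⟨he, hx⟩
    induction e with
    | _ a b =>
      rw [Γ.mem_edgeSet] at he
      rcases Sym2.mem_iff.mp hx with rfl | rfl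
      · exact ⟨b, he, rfl⟩
      · exact ⟨a, he.symm, Sym2.eq_swap⟩
  · rintro ⟨w, hw, rfl⟩
    exact ⟨Γ.mem_edgeSet.mpr hw, Sym2.mem_mk_left x w⟩

lemma aux_incident_card (Γ : SimpleGraph V) (x : V) :
    {e | e ∈ Γ.edgeSet ∧ x ∈ e}.ncard = gDeg Γ x := by
  rw [aux_incident_eq, gDeg]
  apply Set.ncard_image_of_injOn
  intro a ha b hb hab
  rcases Sym2.eq_iff.mp hab with ⟨-, h⟩ | ⟨h1, h2⟩
  · exact h
  · first
    | exact h1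
    | exact h2.trans h1
    | exact h1.trans h2
    | exact absurd h2 (Γ.ne_of_adj ha).symm

lemma aux_edgeConn_le_deg (Γ : SimpleGraph V) (x w : V) (hw : w ≠ x) :
    edgeConn Γ ≤ gDeg Γ x := by
  apply Nat.sInf_le
  refine ⟨{e | e ∈ Γ.edgeSet ∧ x ∈ e}, fun e he => he.1, aux_incident_card Γ x, ?_⟩
  apply aux_isolated _ x w hw
  intro u hu
  rw [SimpleGraph.deleteEdges_adj] at hu
  exact hu.2 ⟨Γ.mem_edgeSet.mpr hu.1, Sym2.mem_mk_left x u⟩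

omit [Fintype V] in
lemma aux_minDeg_le (Γ : SimpleGraph V) (v : V) : minDeg Γ ≤ gDeg Γ v :=
  Nat.sInf_le ⟨v, rfl⟩

lemma aux_count (Γ : SimpleGraph V) (u : V) (hu : ∀ w, w ≠ u → Γ.Adj u w)
    (C : Set V) (hCne : C.Nonempty) (huC : u ∉ C) (T : Set (Sym2 V))
    (hT : ∀ a ∈ C, ∀ b, b ∉ C → Γ.Adj a b → s(a, b) ∈ T)
    (k : ℕ) (hk : k ≤ 1) (y : V) (hy : y ∈ C) (hdy : minDeg Γ + k ≤ gDeg Γ y) :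
    minDeg Γ + k ≤ T.ncard := by
  classical
  set δ := minDeg Γ with hδ
  set F : Finset V := (Set.toFinite C).toFinset with hF
  have hmemF : ∀ a : V, a ∈ F ↔ a ∈ C := fun a => Set.Finite.mem_toFinset _
  set NB : V → Finset V := fun a => (Set.toFinite (Γ.neighborSet a \ C)).toFinset with hNB
  have hmemNB : ∀ a b : V, b ∈ NB a ↔ (Γ.Adj a b ∧ b ∉ C) := by
    intro a b
    rw [hNB, Set.Finite.mem_toFinset, Set.mem_diff, SimpleGraph.mem_neighborSet]
  set cross : Finset (Sym2 V) := F.biUnion (fun a => (NB a).image (fun b => s(a, b))) with hcr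
  have hcrmem : ∀ e ∈ cross, ∃ a b, a ∈ C ∧ b ∉ C ∧ Γ.Adj a b ∧ e = s(a, b) := by
    intro e he
    rw [hcr, Finset.mem_biUnion] at he
    obtain ⟨a, haF, he⟩ := he
    rw [Finset.mem_image] at he
    obtain ⟨b, hb, rfl⟩ := he
    rw [hmemNB] at hb
    exact ⟨a, b, (hmemF a).mp haF, hb.2, hb.1, rfl⟩
  have hsubT : (↑cross : Set (Sym2 V)) ⊆ T := by
    intro e he
    obtain ⟨a, b, ha, hb, hadj, rfl⟩ := hcrmem e he
    exact hT a ha b hb hadj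
  have hTcard : cross.card ≤ T.ncard := by
    calc cross.card = (↑cross : Set (Sym2 V)).ncard := (Set.ncard_coe_finset _).symm
    _ ≤ T.ncard := Set.ncard_le_ncard hsubT (Set.toFinite T)
  have hdisj : ∀ a ∈ F, ∀ a' ∈ F, a ≠ a' →
      Disjoint ((NB a).image (fun b => s(a, b))) ((NB a').image (fun b => s(a', b))) := by
    intro a haF a' haF' hne
    rw [Finset.disjoint_left]
    intro e he he'
    rw [Finset.mem_image] at he he'
    obtain ⟨b, hb, rfl⟩ := he
    obtain ⟨b', hb', heq⟩ := he'
    rw [hmemNB] at hb hb'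
    rcases Sym2.eq_iff.mp heq.symm with ⟨h1, -⟩ | ⟨h1, h2⟩
    · exact hne h1
    · exact hb'.2 (h1 ▸ (hmemF a).mp haF)
  have hcard_im : ∀ a, ((NB a).image (fun b => s(a, b))).card = (NB a).card := by
    intro a
    apply Finset.card_image_of_injOn
    intro b hb b' hb' heq
    rcases Sym2.eq_iff.mp heq with ⟨-, h⟩ | ⟨h1, h2⟩
    · exact h
    · exact h2.trans h1
  have hsum : cross.card = ∑ a ∈ F, (NB a).card := by
    rw [hcr, Finset.card_biUnion hdisj]
    exact Finset.sum_congr rfl (fun a _ => hcard_im a)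
  set c := F.card with hc
  have hyF : y ∈ F := (hmemF y).mpr hy
  have hc1 : 1 ≤ c := Finset.card_pos.mpr ⟨y, hyF⟩
  have hNBu : ∀ a ∈ F, u ∈ NB a := by
    intro a haF
    rw [hmemNB]
    have haC := (hmemF a).mp haF
    have : a ≠ u := fun h => huC (h ▸ haC)
    exact ⟨(hu a this).symm, huC⟩
  have hcle : c ≤ cross.card := by
    apply Finset.card_le_card_of_injOn (fun a => s(a, u))
    · intro a haF
      rw [hcr, Finset.mem_coe, Finset.mem_biUnion]
      exact ⟨a, haF, Finset.mem_image.mpr ⟨u, hNBu a haF, rfl⟩⟩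
    · intro a ha a' ha' heq
      rcases Sym2.eq_iff.mp heq with ⟨h, -⟩ | ⟨h1, h2⟩
      · exact h
      · exfalso
        apply huC
        rw [← h1]
        exact (hmemF a).mp ha
  have hdegb : ∀ a ∈ F, gDeg Γ a + 1 ≤ (NB a).card + c := by
    intro a haF
    have haC := (hmemF a).mp haF
    have hsub : Γ.neighborSet a ⊆ (↑(NB a) : Set V) ∪ (C \ {a}) := by
      intro w hw
      by_cases hwC : w ∈ C
      · right
        exact ⟨hwC, fun h => (Γ.ne_of_adj hw).symm (by simpa using h)⟩
      · left
        rw [Finset.mem_coe, hmemNB]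
        exact ⟨hw, hwC⟩
    have h1 : gDeg Γ a ≤ (NB a).card + (c - 1) := by
      calc gDeg Γ a ≤ ((↑(NB a) : Set V) ∪ (C \ {a})).ncard :=
            Set.ncard_le_ncard hsub (Set.toFinite _)
      _ ≤ (↑(NB a) : Set V).ncard + (C \ {a}).ncard := Set.ncard_union_le _ _
      _ = (NB a).card + (c - 1) := by
          rw [Set.ncard_coe_finset, Set.ncard_diff_singleton_of_mem haC]
          have hCc : C.ncard = c := by
            rw [hc, hF, ← Set.ncard_coe_finset ((Set.toFinite C).toFinset),
              Set.Finite.coe_toFinset]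
          omega
    omega
  by_cases hcd : δ + 1 ≤ c
  · omega
  · push_neg at hcd
    have hcd' : c ≤ δ := by omega
    have hsum_lb : ∑ a ∈ F, (NB a).card ≥ (δ + k + 1 - c) + (c - 1) * (δ + 1 - c) := by
      rw [← Finset.add_sum_erase F _ hyF]
      have h1 : δ + k + 1 - c ≤ (NB y).card := by
        have := hdegb y hyF
        have h2 : δ + k ≤ gDeg Γ y := hdy
        omega
      have h2 : (c - 1) * (δ + 1 - c) ≤ ∑ a ∈ F.erase y, (NB a).card := by
        have := Finset.card_nsmul_le_sum (F.erase y) (fun a => (NB a).card) (δ + 1 - c)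
          (fun a ha => by
            have h3 := hdegb a (Finset.mem_of_mem_erase ha)
            have h4 : δ ≤ gDeg Γ a := aux_minDeg_le Γ a
            show δ + 1 - c ≤ (NB a).card
            omega)
        rw [Finset.card_erase_of_mem hyF, smul_eq_mul] at this
        exact this
      omega
    have harith : (δ + k + 1 - c) + (c - 1) * (δ + 1 - c) ≥ δ + k := by
      rcases Nat.exists_eq_add_of_le hcd' with ⟨t, ht⟩
      have h1 : δ + 1 - c = t + 1 := by omega
      have h2 : δ + k + 1 - c = t + k + 1 := by omega
      rw [h1, h2]
      have h3 : (c - 1) ≤ (c - 1) * (t + 1) := Nat.le_mul_of_pos_right _ (by omega)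
      omega
    omega

lemma aux_conn_set_nonempty (Γ : SimpleGraph V) [Nontrivial V] :
    {n : ℕ | ∃ S : Set (Sym2 V), S ⊆ Γ.edgeSet ∧ S.ncard = n ∧
      ¬ (Γ.deleteEdges S).Connected}.Nonempty := by
  refine ⟨Γ.edgeSet.ncard, Γ.edgeSet, le_refl _, rfl, ?_⟩
  obtain ⟨x, w, hxw⟩ := exists_pair_ne V
  apply aux_isolated _ x w hxw.symm
  intro u hu
  rw [SimpleGraph.deleteEdges_adj] at hu
  exact hu.2 (Γ.mem_edgeSet.mpr hu.1)

lemma aux_edgeConn_eq (Γ : SimpleGraph V) [Nontrivial V] (u : V)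
    (hu : ∀ w, w ≠ u → Γ.Adj u w) : edgeConn Γ = minDeg Γ := by
  have hne : (Set.range (gDeg Γ)).Nonempty := Set.range_nonempty _
  have hmem : minDeg Γ ∈ Set.range (gDeg Γ) := Nat.sInf_mem hne
  obtain ⟨x₀, hx₀⟩ := hmem
  apply le_antisymm
  · obtain ⟨w, hw⟩ := exists_ne x₀
    calc edgeConn Γ ≤ gDeg Γ x₀ := aux_edgeConn_le_deg Γ x₀ w hw
    _ = minDeg Γ := hx₀
  · apply le_csInf (aux_conn_set_nonempty Γ)
    rintro n ⟨S, hS, rfl, hdisc⟩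
    obtain ⟨C, hCne, huC, hcross⟩ := aux_extract Γ S u hdisc
    obtain ⟨y, hy⟩ := hCne
    have := aux_count Γ u hu C ⟨y, hy⟩ huC S hcross 0 (by omega) y hy
      (by simpa using aux_minDeg_le Γ y)
    simpa using this

lemma aux_gDeg_le_card (Γ : SimpleGraph V) (v : V) : gDeg Γ v ≤ Fintype.card V - 1 := by
  have hsub : Γ.neighborSet v ⊆ {v}ᶜ := by
    intro w hw
    simp only [Set.mem_compl_iff, Set.mem_singleton_iff]
    exact fun h => (Γ.ne_of_adj hw).symm (by simpa using h)
  calc gDeg Γ v ≤ ({v}ᶜ : Set V).ncard := Set.ncard_le_ncard hsub (Set.toFinite _)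
  _ = Fintype.card V - 1 := by
      rw [Set.compl_eq_univ_diff, Set.ncard_diff_singleton_of_mem (Set.mem_univ v),
        Set.ncard_univ, Nat.card_eq_fintype_card]

lemma aux_edgeConn_delete_eq (Γ : SimpleGraph V) [Nontrivial V] (u y : V)
    (hu : ∀ w, w ≠ u → Γ.Adj u w) (hy : y ≠ u) (hdy : minDeg Γ + 1 ≤ gDeg Γ y) :
    edgeConn (Γ.deleteEdges {s(u, y)}) = minDeg Γ := by
  set Γ' := Γ.deleteEdges {s(u, y)} with hΓ'
  have hne : (Set.range (gDeg Γ)).Nonempty := Set.range_nonempty _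
  have hmem : minDeg Γ ∈ Set.range (gDeg Γ) := Nat.sInf_mem hne
  obtain ⟨x₀, hx₀⟩ := hmem
  have hx₀u : x₀ ≠ u := by
    intro h
    have h1 : gDeg Γ y ≤ gDeg Γ u := by
      calc gDeg Γ y ≤ Fintype.card V - 1 := aux_gDeg_le_card Γ y
      _ = gDeg Γ u := by
          have : Γ.neighborSet u = {u}ᶜ := by
            ext w
            simp only [SimpleGraph.mem_neighborSet, Set.mem_compl_iff, Set.mem_singleton_iff]
            exact ⟨fun hadj h => (Γ.ne_of_adj hadj).symm h, fun h => hu w h⟩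
          rw [gDeg, this, Set.compl_eq_univ_diff,
            Set.ncard_diff_singleton_of_mem (Set.mem_univ u),
            Set.ncard_univ, Nat.card_eq_fintype_card]
    rw [h] at hx₀
    omega
  have hx₀y : x₀ ≠ y := by
    intro h
    rw [h] at hx₀
    omega
  have hnb : Γ'.neighborSet x₀ = Γ.neighborSet x₀ := by
    ext w
    simp only [SimpleGraph.mem_neighborSet, hΓ', SimpleGraph.deleteEdges_adj,
      Set.mem_singleton_iff]
    constructor
    · exact fun h => h.1
    · intro h
      refine ⟨h, fun heq => ?_⟩
      rcases Sym2.eq_iff.mp heq with ⟨h1, -⟩ | ⟨h1, -⟩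
      · exact hx₀u h1
      · exact hx₀y h1
  apply le_antisymm
  · obtain ⟨w, hw⟩ := exists_ne x₀
    calc edgeConn Γ' ≤ gDeg Γ' x₀ := aux_edgeConn_le_deg Γ' x₀ w hw
    _ = minDeg Γ := by rw [gDeg, hnb, ← gDeg, hx₀]
  · apply le_csInf (aux_conn_set_nonempty Γ')
    rintro n ⟨S, hS, rfl, hdisc⟩
    rw [hΓ', SimpleGraph.deleteEdges_deleteEdges] at hdisc
    obtain ⟨C, hCne, huC, hcross⟩ := aux_extract Γ ({s(u, y)} ∪ S) u hdisc
    by_cases hyC : y ∈ C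
    · have h1 := aux_count Γ u hu C hCne huC ({s(u, y)} ∪ S) hcross 1 (le_refl 1) y hyC hdy
      have h2 : ({s(u, y)} ∪ S).ncard ≤ S.ncard + 1 := by
        rw [← Set.insert_eq]
        exact Set.ncard_insert_le _ _
      omega
    · have hcross' : ∀ a ∈ C, ∀ b, b ∉ C → Γ.Adj a b → s(a, b) ∈ S := by
        intro a ha b hb hadj
        rcases hcross a ha b hb hadj with h | h
        · exfalso
          rw [Set.mem_singleton_iff] at h
          rcases Sym2.eq_iff.mp h with ⟨h1, -⟩ | ⟨h1, -⟩
          · exact huC (h1 ▸ ha)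
          · exact hyC (h1 ▸ ha)
        · exact h
      obtain ⟨y₀, hy₀⟩ := hCne
      have := aux_count Γ u hu C ⟨y₀, hy₀⟩ huC S hcross' 0 (by omega) y₀ hy₀
        (by simpa using aux_minDeg_le Γ y₀)
      simpa using this

end GraphAux

section GroupBasics
variable {G : Type*} [Group G]

lemma epg_adj {x y : G} :
    (enhancedPowerGraph G).Adj x y ↔
      x ≠ y ∧ ∃ z : G, x ∈ zpowers z ∧ y ∈ zpowers z := by
  rw [enhancedPowerGraph, SimpleGraph.fromRel_adj]
  constructor
  · rintro ⟨h, h2 | ⟨z, hz1, hz2⟩⟩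
    exacts [⟨h, h2⟩, ⟨h, z, hz2, hz1⟩]
  · rintro ⟨h, hz⟩
    exact ⟨h, Or.inl hz⟩

lemma epg_adj_one {x : G} (hx : x ≠ 1) : (enhancedPowerGraph G).Adj 1 x :=
  epg_adj.mpr ⟨fun h => hx h.symm, x, one_mem _, mem_zpowers x⟩

lemma epg_adj_of_mem {x w z : G} (hx : x ∈ zpowers z) (hw : w ∈ zpowers z) (hne : x ≠ w) :
    (enhancedPowerGraph G).Adj x w :=
  epg_adj.mpr ⟨hne, z, hx, hw⟩

variable [Fintype G]

lemma zpowers_eq_zpowers_of_card {x z : G} (hx : x ∈ zpowers z)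
    (hcard : orderOf z ≤ orderOf x) : zpowers x = zpowers z := by
  apply Subgroup.eq_of_le_of_card_ge (zpowers_le.mpr hx)
  rw [Nat.card_zpowers, Nat.card_zpowers]
  exact hcard

lemma ncard_zpowers (x : G) : (↑(zpowers x) : Set G).ncard = orderOf x := by
  rw [← Nat.card_coe_set_eq]
  exact Nat.card_zpowers x

end GroupBasics

section Backward
variable {G : Type*} [Group G] [Fintype G]
variable {p : ℕ}

lemma epg_nb_exp_p (hp : p.Prime) (horder : ∀ x : G, x ≠ 1 → orderOf x = p)
    {x : G} (hx : x ≠ 1) :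
    (enhancedPowerGraph G).neighborSet x = (↑(zpowers x) : Set G) \ {x} := by
  ext w
  constructor
  · intro hw
    rw [SimpleGraph.mem_neighborSet, epg_adj] at hw
    obtain ⟨hne, z, hxz, hwz⟩ := hw
    have hz1 : z ≠ 1 := by
      rintro rfl
      rw [zpowers_one_eq_bot, Subgroup.mem_bot] at hxz
      exact hx hxz
    have : zpowers x = zpowers z :=
      zpowers_eq_zpowers_of_card hxz (by rw [horder x hx, horder z hz1])
    exact ⟨this ▸ hwz, fun h => hne ((Set.mem_singleton_iff.mp h).symm ▸ rfl)⟩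
  · rintro ⟨hw, hwx⟩
    rw [SimpleGraph.mem_neighborSet]
    exact epg_adj_of_mem (mem_zpowers x) hw
      (fun h => hwx (Set.mem_singleton_iff.mpr h.symm))

lemma epg_deg_exp_p (hp : p.Prime) (horder : ∀ x : G, x ≠ 1 → orderOf x = p)
    {x : G} (hx : x ≠ 1) : gDeg (enhancedPowerGraph G) x = p - 1 := by
  rw [gDeg, epg_nb_exp_p hp horder hx,
    Set.ncard_diff_singleton_of_mem (by exact mem_zpowers x), ncard_zpowers, horder x hx]

lemma epg_block (hp : p.Prime) (horder : ∀ x : G, x ≠ 1 → orderOf x = p)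
    (T : Set (Sym2 G)) (hT : T.ncard ≤ p - 2) :
    ((enhancedPowerGraph G).deleteEdges T).Connected := by
  by_contra h
  obtain ⟨C, ⟨x, hxC⟩, h1C, hcross⟩ := aux_extract (enhancedPowerGraph G) T 1 h
  have hx1 : x ≠ 1 := fun h => h1C (h ▸ hxC)
  set A : Set G := (↑(zpowers x) : Set G) ∩ C with hA
  set B' : Set G := (↑(zpowers x) : Set G) \ C with hB'
  have hxA : x ∈ A := ⟨mem_zpowers x, hxC⟩
  have h1B' : (1 : G) ∈ B' := ⟨one_mem _, h1C⟩
  set U1 : Set (Sym2 G) := (fun a => s(a, (1 : G))) '' (A \ {x}) with hU1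
  set U2 : Set (Sym2 G) := (fun b => s(x, b)) '' B' with hU2
  have hU1T : U1 ⊆ T := by
    rintro e ⟨a, ⟨⟨haz, haC⟩, hax⟩, rfl⟩
    have ha1 : a ≠ 1 := fun h => h1C (h ▸ haC)
    exact hcross a haC 1 h1C (epg_adj_of_mem haz (one_mem _) ha1)
  have hU2T : U2 ⊆ T := by
    rintro e ⟨b, ⟨hbz, hbC⟩, rfl⟩
    exact hcross x hxC b hbC (epg_adj_of_mem (mem_zpowers x) hbz (fun h => hbC (h ▸ hxC)))
  have hU1card : U1.ncard = A.ncard - 1 := by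
    rw [hU1, Set.ncard_image_of_injOn, Set.ncard_diff_singleton_of_mem hxA]
    intro a ⟨⟨haz, haC⟩, hax⟩ a' ⟨⟨haz', haC'⟩, hax'⟩ heq
    rcases Sym2.eq_iff.mp heq with ⟨h1, -⟩ | ⟨h1, h2⟩
    · exact h1
    · exact absurd h1 (fun h => h1C (h ▸ haC))
  have hU2card : U2.ncard = B'.ncard := by
    rw [hU2, Set.ncard_image_of_injOn]
    intro b ⟨hbz, hbC⟩ b' ⟨hbz', hbC'⟩ heq
    rcases Sym2.eq_iff.mp heq with ⟨-, h⟩ | ⟨h1, h2⟩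
    · exact h
    · exact absurd (show b ∈ C by rw [h2]; exact hxC) hbC
  have hdisj : Disjoint U1 U2 := by
    rw [Set.disjoint_left]
    rintro e ⟨a, ⟨⟨haz, haC⟩, hax⟩, rfl⟩ ⟨b, ⟨hbz, hbC⟩, heq⟩
    rcases Sym2.eq_iff.mp heq with ⟨h1, h2⟩ | ⟨h1, h2⟩
    · exact hax (Set.mem_singleton_iff.mpr h1.symm)
    · exact hx1 h1
  have hunion : (U1 ∪ U2).ncard = (A.ncard - 1) + B'.ncard := by
    rw [Set.ncard_union_eq hdisj (Set.toFinite _) (Set.toFinite _), hU1card, hU2card]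
  have hsplit : A.ncard + B'.ncard = p := by
    rw [hA, hB', Set.ncard_inter_add_ncard_diff_eq_ncard, ncard_zpowers, horder x hx1]
  have hUT : (U1 ∪ U2).ncard ≤ T.ncard :=
    Set.ncard_le_ncard (Set.union_subset hU1T hU2T) (Set.toFinite T)
  have hAcard : 0 < A.ncard := (Set.ncard_pos (Set.toFinite _)).mpr ⟨x, hxA⟩
  have hBcard : 0 < B'.ncard := (Set.ncard_pos (Set.toFinite _)).mpr ⟨1, h1B'⟩
  have hp2 : 2 ≤ p := hp.two_le
  omega

lemma epg_edgeConn_exp_p (hp : p.Prime) (horder : ∀ x : G, x ≠ 1 → orderOf x = p)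
    [Nontrivial G] : edgeConn (enhancedPowerGraph G) = p - 1 := by
  obtain ⟨x, hx⟩ := exists_ne (1 : G)
  apply le_antisymm
  · obtain ⟨w, hw⟩ := exists_ne x
    calc edgeConn (enhancedPowerGraph G) ≤ gDeg (enhancedPowerGraph G) x :=
        aux_edgeConn_le_deg _ x w hw
    _ = p - 1 := epg_deg_exp_p hp horder hx
  · apply le_csInf (aux_conn_set_nonempty _)
    rintro n ⟨S, hS, rfl, hdisc⟩
    by_contra hlt
    push_neg at hlt
    exact hdisc (epg_block hp horder S (by omega))

lemma epg_per_edge (hp : p.Prime) (horder : ∀ x : G, x ≠ 1 → orderOf x = p)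
    [Nontrivial G] {x w : G} (hx1 : x ≠ 1) (hadj : (enhancedPowerGraph G).Adj x w) :
    edgeConn ((enhancedPowerGraph G).deleteEdges {s(x, w)}) = p - 2 := by
  set Γ := enhancedPowerGraph G with hΓ
  set Γ' := Γ.deleteEdges {s(x, w)} with hΓ'
  have hxw : x ≠ w := Γ.ne_of_adj hadj
  apply le_antisymm
  · have hnb : Γ'.neighborSet x = Γ.neighborSet x \ {w} := by
      ext v
      simp only [SimpleGraph.mem_neighborSet, hΓ', SimpleGraph.deleteEdges_adj,
        Set.mem_singleton_iff, Set.mem_diff]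
      constructor
      · rintro ⟨h1, h2⟩
        exact ⟨h1, fun hv => h2 (by rw [hv])⟩
      · rintro ⟨h1, h2⟩
        refine ⟨h1, fun heq => ?_⟩
        rcases Sym2.eq_iff.mp heq with ⟨-, h3⟩ | ⟨h3, h4⟩
        · exact h2 h3
        · exact (Γ.ne_of_adj h1) h4.symm
    have hdeg : gDeg Γ' x = p - 2 := by
      rw [gDeg, hnb, Set.ncard_diff_singleton_of_mem (by exact hadj)]
      have h5 : (Γ.neighborSet x).ncard = p - 1 := by
        have h6 := epg_deg_exp_p hp horder hx1
        rw [gDeg] at h6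
        rw [hΓ]
        exact h6
      omega
    obtain ⟨v, hv⟩ := exists_ne x
    calc edgeConn Γ' ≤ gDeg Γ' x := aux_edgeConn_le_deg _ x v hv
    _ = p - 2 := hdeg
  · apply le_csInf (aux_conn_set_nonempty _)
    rintro n ⟨S, hS, rfl, hdisc⟩
    rw [hΓ', SimpleGraph.deleteEdges_deleteEdges] at hdisc
    by_contra hlt
    push_neg at hlt
    apply hdisc
    apply epg_block hp horder
    calc ({s(x, w)} ∪ S).ncard ≤ S.ncard + 1 := by
          rw [← Set.insert_eq]
          exact Set.ncard_insert_le _ _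
    _ ≤ p - 2 := by
        have := hp.two_le
        omega

theorem backward_direction (hp : p.Prime) (hexp : Monoid.exponent G = p)
    (hnc : ¬ IsCyclic G) : MinEdgeConnected (enhancedPowerGraph G) := by
  have : Nontrivial G := by
    by_contra h
    rw [not_nontrivial_iff_subsingleton] at h
    exact hnc isCyclic_of_subsingleton
  have horder : ∀ x : G, x ≠ 1 → orderOf x = p := by
    intro x hx
    have h1 : orderOf x ∣ p := hexp ▸ Monoid.order_dvd_exponent x
    rcases (Nat.Prime.eq_one_or_self_of_dvd hp _ h1) with h | h
    · exact absurd (orderOf_eq_one_iff.mp h) hx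
    · exact h
  intro e he
  induction e with
  | _ a b =>
    rw [SimpleGraph.mem_edgeSet] at he
    rw [epg_edgeConn_exp_p hp horder]
    have hp2 := hp.two_le
    by_cases ha : a = 1
    · have hb : b ≠ 1 := fun h => (enhancedPowerGraph G).ne_of_adj he (ha.trans h.symm)
      rw [Sym2.eq_swap]
      rw [epg_per_edge hp horder hb he.symm]
      omega
    · rw [epg_per_edge hp horder ha he]
      omega

end Backward

section Center

variable {G : Type*} [Group G]

lemma center_exists_ne_one (hnil : Group.IsNilpotent G) [Nontrivial G] :
    ∃ c : G, c ∈ Subgroup.center G ∧ c ≠ 1 := by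
  by_contra hc
  push_neg at hc
  have hbot : ∀ n, Subgroup.upperCentralSeries G n = ⊥ := by
    intro n
    induction n with
    | zero => exact Subgroup.upperCentralSeries_zero G
    | succ n ih =>
      ext x
      simp only [Subgroup.mem_bot]
      constructor
      · intro hx
        apply hc x
        rw [Subgroup.mem_center_iff]
        intro y
        have h2 := (Subgroup.mem_upperCentralSeries_succ_iff).mp hx y
        rw [ih, Subgroup.mem_bot] at h2
        have h3 : x * y * x⁻¹ = y := by
          have := mul_eq_one_iff_eq_inv.mp h2
          rw [this]
          simp
        calc y * x = (x * y * x⁻¹) * x := by rw [h3]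
        _ = x * y := by group
      · rintro rfl
        exact Subgroup.one_mem _
  obtain ⟨n, hn⟩ := hnil.nilpotent'
  rw [hbot n] at hn
  obtain ⟨x, hx⟩ := exists_ne (1 : G)
  have : x ∈ (⊥ : Subgroup G) := by rw [hn]; exact Subgroup.mem_top x
  exact hx (Subgroup.mem_bot.mp this)

end Center

section Core
variable {G : Type*} [Group G] [Fintype G]

/-- closed neighbourhood in the enhanced power graph -/
noncomputable def ncl (G : Type*) [Group G] (v : G) : Set G :=
  insert v ((enhancedPowerGraph G).neighborSet v)

lemma mem_ncl_self (v : G) : v ∈ ncl G v := Set.mem_insert _ _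

lemma zpowers_subset_ncl {v w z : G} (hv : v ∈ zpowers z) (hw : w ∈ zpowers z) :
    w ∈ ncl G v := by
  by_cases hwv : w = v
  · rw [hwv]; exact mem_ncl_self v
  · exact Set.mem_insert_of_mem _
      (SimpleGraph.mem_neighborSet _ _ _ |>.mpr (epg_adj.mpr ⟨fun h => hwv h.symm, z, hv, hw⟩))

lemma ncl_ncard (v : G) : (ncl G v).ncard = gDeg (enhancedPowerGraph G) v + 1 := by
  rw [ncl, Set.ncard_insert_of_notMem _ (Set.toFinite _), gDeg]
  exact fun h => (enhancedPowerGraph G).irrefl (SimpleGraph.mem_neighborSet _ _ _ |>.mp h)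

lemma ncl_eq_zpowers_of_max {c : G}
    (hcmax : ∀ d, c ∈ zpowers d → zpowers d = zpowers c) :
    ncl G c = ↑(zpowers c) := by
  apply Set.Subset.antisymm
  · intro w hw
    rcases Set.mem_insert_iff.mp hw with rfl | hw
    · exact mem_zpowers w
    · rw [SimpleGraph.mem_neighborSet, epg_adj] at hw
      obtain ⟨hne, d, hcd, hwd⟩ := hw
      rw [← hcmax d hcd]
      exact hwd
  · intro w hw
    exact zpowers_subset_ncl (mem_zpowers c) hw

lemma gt_core (hnil : Group.IsNilpotent G) (hnc : ¬ IsCyclic G)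
    (hall : ∀ y : G, y ≠ 1 →
      gDeg (enhancedPowerGraph G) y = minDeg (enhancedPowerGraph G)) :
    ∃ p : ℕ, p.Prime ∧ (∃ n : ℕ, Nat.card G = p ^ n) ∧ Monoid.exponent G = p := by
  classical
  have hnontriv : Nontrivial G := by
    by_contra h
    rw [not_nontrivial_iff_subsingleton] at h
    exact hnc isCyclic_of_subsingleton
  set δ := minDeg (enhancedPowerGraph G) with hδ
  -- element of maximal order
  obtain ⟨z, -, hzmax⟩ := Finset.exists_max_image Finset.univ (orderOf (G := G))
    ⟨1, Finset.mem_univ 1⟩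
  have hzmax' : ∀ w : G, orderOf w ≤ orderOf z := fun w => hzmax w (Finset.mem_univ w)
  set m := orderOf z with hm
  have hm2 : 2 ≤ m := by
    obtain ⟨x, hx⟩ := exists_ne (1 : G)
    have h1 : orderOf x ≠ 1 := fun h => hx (orderOf_eq_one_iff.mp h)
    have h2 : 0 < orderOf x := orderOf_pos x
    have := hzmax' x
    omega
  have hz1 : z ≠ 1 := by
    intro h
    rw [h, orderOf_one] at hm
    omega
  -- ncl z = zpowers z and δ + 1 = m
  have hmaxz : ∀ d, z ∈ zpowers d → zpowers d = zpowers z :=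
    fun d hd => (zpowers_eq_zpowers_of_card hd (hzmax' d)).symm
  have hnclz : ncl G z = ↑(zpowers z) := ncl_eq_zpowers_of_max hmaxz
  have hδm : δ + 1 = m := by
    have h1 := ncl_ncard z
    rw [hnclz, ncard_zpowers, hall z hz1] at h1
    omega
  -- KEY (i)
  have key_i : ∀ v : G, v ≠ 1 → ∃ s : G, orderOf s = m ∧ ncl G v = ↑(zpowers s) := by
    intro v hv
    obtain ⟨c, hcmem, hcmax⟩ := Finset.exists_max_image
      (Finset.univ.filter (fun d : G => v ∈ zpowers d)) (orderOf (G := G))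
      ⟨v, by simp [mem_zpowers]⟩
    rw [Finset.mem_filter] at hcmem
    have hvc : v ∈ zpowers c := hcmem.2
    have hcmax' : ∀ d, v ∈ zpowers d → orderOf d ≤ orderOf c := by
      intro d hd
      exact hcmax d (by simp [hd])
    have hc1 : c ≠ 1 := by
      rintro rfl
      rw [zpowers_one_eq_bot, Subgroup.mem_bot] at hvc
      exact hv hvc
    have hcm : ∀ d, c ∈ zpowers d → zpowers d = zpowers c := by
      intro d hcd
      have hvd : v ∈ zpowers d := zpowers_le.mpr hcd hvc
      exact (zpowers_eq_zpowers_of_card hcd (hcmax' d hvd)).symm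
    have hnclc : ncl G c = ↑(zpowers c) := ncl_eq_zpowers_of_max hcm
    have hordc : orderOf c = m := by
      have h1 := ncl_ncard c
      rw [hnclc, ncard_zpowers, hall c hc1] at h1
      omega
    refine ⟨c, hordc, ?_⟩
    have hsub : (↑(zpowers c) : Set G) ⊆ ncl G v := fun w hw => zpowers_subset_ncl hvc hw
    have hcard : (ncl G v).ncard ≤ (↑(zpowers c) : Set G).ncard := by
      rw [ncard_zpowers, hordc, ncl_ncard, hall v hv]
      omega
    exact (Set.eq_of_subset_of_ncard_le hsub hcard (Set.toFinite _)).symm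
  -- KEY (ii)
  have key_ii : ∀ v v' : G, v ≠ 1 → v' ∈ ncl G v → v' ≠ 1 → ncl G v' = ncl G v := by
    intro v v' hv hv' hv'1
    obtain ⟨s, hs, hncl⟩ := key_i v hv
    rw [hncl] at hv' ⊢
    have hsub : (↑(zpowers s) : Set G) ⊆ ncl G v' := fun w hw => zpowers_subset_ncl hv' hw
    have hcard : (ncl G v').ncard ≤ (↑(zpowers s) : Set G).ncard := by
      rw [ncard_zpowers, hs, ncl_ncard, hall v' hv'1]
      omega
    exact (Set.eq_of_subset_of_ncard_le hsub hcard (Set.toFinite _)).symm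
  -- central element of prime order q with q ∣ m
  obtain ⟨c₀, hc₀mem, hc₀1⟩ := center_exists_ne_one hnil
  have ho2 : 2 ≤ orderOf c₀ := by
    have h1 : orderOf c₀ ≠ 1 := fun h => hc₀1 (orderOf_eq_one_iff.mp h)
    have h2 : 0 < orderOf c₀ := orderOf_pos c₀
    omega
  obtain ⟨q, hq, hqo⟩ : ∃ q : ℕ, q.Prime ∧ q ∣ orderOf c₀ :=
    ⟨(orderOf c₀).minFac, Nat.minFac_prime (by omega), Nat.minFac_dvd _⟩
  have hq2 := hq.two_le
  set c := c₀ ^ (orderOf c₀ / q) with hcdef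
  have hordc : orderOf c = q := by
    rw [hcdef, orderOf_pow]
    have h1 : orderOf c₀ / q ∣ orderOf c₀ := Nat.div_dvd_of_dvd hqo
    rw [Nat.gcd_eq_right h1]
    exact Nat.div_div_self hqo (by omega)
  have hcmem : c ∈ Subgroup.center G := Subgroup.pow_mem _ hc₀mem _
  have hc1 : c ≠ 1 := by
    intro h
    rw [h, orderOf_one] at hordc
    omega
  have hcom_all : ∀ g : G, Commute c g := by
    intro g
    exact (Subgroup.mem_center_iff.mp hcmem g).symm
  have hqm : q ∣ m := by
    by_contra hqm
    have hco : (orderOf c).Coprime (orderOf z) := by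
      rw [hordc, ← hm]
      exact (Nat.Prime.coprime_iff_not_dvd hq).mpr hqm
    have h1 : orderOf (c * z) = q * m := by
      rw [(hcom_all z).orderOf_mul_eq_mul_orderOf_of_coprime hco, hordc, hm]
    have h2 := hzmax' (c * z)
    rw [h1] at h2
    have h3 : 2 * m ≤ q * m := Nat.mul_le_mul_right m hq2
    have h4 : m < 2 * m := by omega
    exact absurd (lt_of_lt_of_le h4 (le_trans h3 h2)) (lt_irrefl m)
  by_cases hmq : m = q
  · -- conclusion case : p := q
    have hord_all : ∀ x : G, x ≠ 1 → orderOf x = q := by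
      intro x hx
      obtain ⟨s, hs, hncl⟩ := key_i x hx
      have hxs : x ∈ zpowers s := by
        have h0 := mem_ncl_self x
        rw [hncl] at h0
        exact h0
      have h1 : orderOf x ∣ m := hs ▸ orderOf_dvd_of_mem_zpowers hxs
      rw [hmq] at h1
      rcases (Nat.Prime.eq_one_or_self_of_dvd hq _ h1) with h | h
      · exact absurd (orderOf_eq_one_iff.mp h) hx
      · exact h
    have hexp : Monoid.exponent G = q := by
      apply Nat.dvd_antisymm
      · rw [Monoid.exponent_dvd]
        intro g
        by_cases hg : g = 1
        · rw [hg, orderOf_one]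
          exact one_dvd q
        · rw [hord_all g hg]
      · have h1 := Monoid.order_dvd_exponent z
        rw [← hm, hmq] at h1
        exact h1
    refine ⟨q, hq, ?_, hexp⟩
    have hcard_ne : Nat.card G ≠ 0 := Nat.card_pos.ne'
    have huniq : ∀ {d : ℕ}, d.Prime → d ∣ Nat.card G → d = q := by
      intro d hd hdvd
      haveI : Fact d.Prime := ⟨hd⟩
      have hdvd' : d ∣ Fintype.card G := by rwa [← Nat.card_eq_fintype_card]
      obtain ⟨x, hx⟩ := exists_prime_orderOf_dvd_card d hdvd'
      have hx1 : x ≠ 1 := by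
        intro h
        rw [h, orderOf_one] at hx
        have := hd.two_le
        omega
      rw [← hx, hord_all x hx1]
    exact ⟨_, Nat.eq_prime_pow_of_unique_prime_dvd hcard_ne huniq⟩
  · -- contradiction case
    exfalso
    obtain ⟨s₀, hs₀ord, hncl₀⟩ := key_i c hc1
    -- an element outside zpowers s₀
    have hex : ∃ g : G, g ∉ zpowers s₀ := by
      by_contra hgg
      push_neg at hgg
      exact hnc ⟨⟨s₀, hgg⟩⟩
    obtain ⟨g, hg⟩ := hex
    have hg1 : g ≠ 1 := fun h => hg (h ▸ one_mem _)
    have hcg : c ∉ ncl G g := by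
      intro hcg
      have h1 : ncl G c = ncl G g := key_ii g c hg1 hcg hc1
      have h2 : g ∈ ncl G g := mem_ncl_self g
      rw [← h1, hncl₀] at h2
      exact hg h2
    obtain ⟨s₁, hs₁ord, hncl₁⟩ := key_i g hg1
    have hm0 : m ≠ 0 := by omega
    obtain ⟨a, ha⟩ : ∃ a : ℕ, a = m.factorization q := ⟨_, rfl⟩
    have ha1 : 1 ≤ a := by
      rw [ha]
      exact Nat.Prime.factorization_pos_of_dvd hq hm0 hqm
    have hqa_dvd : q ^ a ∣ m := by
      rw [ha]
      exact Nat.ordProj_dvd m q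
    obtain ⟨t, hmt⟩ : ∃ t : ℕ, m = q ^ a * t := hqa_dvd
    have hqa_dvd : q ^ a ∣ m := ⟨t, hmt⟩
    have hqa_pos : 0 < q ^ a := Nat.pow_pos (n := a) (by omega)
    have ht_div : m / q ^ a = t := by
      rw [hmt]
      exact Nat.mul_div_cancel_left t hqa_pos
    have hqt : ¬ q ∣ t := by
      have h1 := Nat.not_dvd_ordCompl hq hm0
      rw [← ha, ht_div] at h1
      exact h1
    have ht0 : t ≠ 0 := by
      intro h
      rw [h, mul_zero] at hmt
      omega
    by_cases ht : t = 1
    · -- m = q ^ a with a ≥ 2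
      have hma : m = q ^ a := by
        rw [hmt, ht, mul_one]
      have ha2 : 2 ≤ a := by
        by_contra hcon
        push_neg at hcon
        have h1 : a = 1 := by omega
        rw [h1, pow_one] at hma
        exact hmq hma
      have harr : m / q ^ (a - 1) = q := by
        rw [hma, show a = (a - 1) + 1 from by omega, pow_succ]
        rw [show (a - 1) + 1 - 1 = a - 1 from by omega]
        exact Nat.mul_div_cancel_left q (Nat.pow_pos (by omega))
      set w := s₁ ^ (q ^ (a - 1)) with hwdef
      have hword : orderOf w = q := by
        rw [hwdef, orderOf_pow, hs₁ord]
        have h1 : q ^ (a - 1) ∣ m := by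
          rw [hma]
          exact pow_dvd_pow q (by omega)
        rw [Nat.gcd_eq_right h1]
        exact harr
      have hw1 : w ≠ 1 := by
        intro h
        rw [h, orderOf_one] at hword
        omega
      have hcomw : Commute c s₁ := hcom_all s₁
      set g' := c * s₁ with hg'def
      have hgw : g' ^ (q ^ (a - 1)) = w := by
        rw [hg'def, hcomw.mul_pow, hwdef]
        have hcpow : c ^ (q ^ (a - 1)) = 1 := by
          apply orderOf_dvd_iff_pow_eq_one.mp
          rw [hordc]
          exact dvd_pow_self q (by omega)
        rw [hcpow, one_mul]
      have hg'1 : g' ≠ 1 := by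
        intro h
        have h1 : w = 1 := by rw [← hgw, h, one_pow]
        exact hw1 h1
      have hwg' : w ∈ zpowers g' := by
        rw [← hgw]
        exact Subgroup.pow_mem _ (mem_zpowers g') _
      have hwnclg' : w ∈ ncl G g' := zpowers_subset_ncl (mem_zpowers g') hwg'
      have h1 : ncl G w = ncl G g' := key_ii g' w hg'1 hwnclg' hw1
      have hws1 : w ∈ zpowers s₁ := by
        rw [hwdef]
        exact Subgroup.pow_mem _ (mem_zpowers s₁) _
      have hwnclg : w ∈ ncl G g := by
        rw [hncl₁]
        exact hws1
      have h2 : ncl G w = ncl G g := key_ii g w hg1 hwnclg hw1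
      have h3 : g' ∈ ncl G g' := mem_ncl_self g'
      rw [← h1, h2, hncl₁] at h3
      have h4 : g' ∈ zpowers s₁ := h3
      have h5 : c ∈ zpowers s₁ := by
        have h6 := mul_mem h4 (inv_mem (mem_zpowers s₁))
        rwa [hg'def, mul_inv_cancel_right] at h6
      apply hcg
      rw [hncl₁]
      exact h5
    · -- t ≥ 2
      have ht2 : 2 ≤ t := by omega
      set y₁ := s₁ ^ (q ^ a) with hy₁def
      have hy₁ord : orderOf y₁ = t := by
        rw [hy₁def, orderOf_pow, hs₁ord, Nat.gcd_eq_right hqa_dvd]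
        exact ht_div
      have hy₁1 : y₁ ≠ 1 := by
        intro h
        rw [h, orderOf_one] at hy₁ord
        omega
      set g' := c * y₁ with hg'def
      have hcomy : Commute c y₁ := hcom_all y₁
      have hcoqt : Nat.Coprime q t := (Nat.Prime.coprime_iff_not_dvd hq).mpr hqt
      have hg't : g' ^ t = c ^ t := by
        rw [hg'def, hcomy.mul_pow]
        have h1 : y₁ ^ t = 1 := by
          rw [← hy₁ord]
          exact pow_orderOf_eq_one y₁
        rw [h1, mul_one]
      have hctord : orderOf (c ^ t) = orderOf c :=
        Nat.Coprime.orderOf_pow (by rw [hordc]; exact hcoqt)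
      have hzc : zpowers (c ^ t) = zpowers c := by
        apply zpowers_eq_zpowers_of_card (Subgroup.pow_mem _ (mem_zpowers c) t)
        rw [hctord]
      have hcg' : c ∈ zpowers g' := by
        have h1 : c ∈ zpowers (c ^ t) := by
          rw [hzc]
          exact mem_zpowers c
        have h2 : zpowers (c ^ t) ≤ zpowers g' := by
          rw [← hg't]
          exact zpowers_le.mpr (Subgroup.pow_mem _ (mem_zpowers g') t)
        exact h2 h1
      have hg'q : g' ^ q = y₁ ^ q := by
        rw [hg'def, hcomy.mul_pow]
        have h1 : c ^ q = 1 := by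
          rw [← hordc]
          exact pow_orderOf_eq_one c
        rw [h1, one_mul]
      have hy₁qord : orderOf (y₁ ^ q) = orderOf y₁ :=
        Nat.Coprime.orderOf_pow (by rw [hy₁ord]; exact hcoqt.symm)
      have hzy : zpowers (y₁ ^ q) = zpowers y₁ := by
        apply zpowers_eq_zpowers_of_card (Subgroup.pow_mem _ (mem_zpowers y₁) q)
        rw [hy₁qord]
      have hy₁g' : y₁ ∈ zpowers g' := by
        have h1 : y₁ ∈ zpowers (y₁ ^ q) := by
          rw [hzy]
          exact mem_zpowers y₁
        have h2 : zpowers (y₁ ^ q) ≤ zpowers g' := by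
          rw [← hg'q]
          exact zpowers_le.mpr (Subgroup.pow_mem _ (mem_zpowers g') q)
        exact h2 h1
      have hy₁s₁ : y₁ ∈ zpowers s₁ := by
        rw [hy₁def]
        exact Subgroup.pow_mem _ (mem_zpowers s₁) _
      have hg'1 : g' ≠ 1 := by
        intro h
        have h1 : c = y₁⁻¹ := by
          rw [hg'def] at h
          exact eq_inv_of_mul_eq_one_left h
        apply hcg
        rw [hncl₁, h1]
        exact inv_mem hy₁s₁
      have h1 : c ∈ ncl G g' := zpowers_subset_ncl (mem_zpowers g') hcg'
      have h2 : ncl G c = ncl G g' := key_ii g' c hg'1 h1 hc1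
      have h3 : y₁ ∈ ncl G g' := zpowers_subset_ncl (mem_zpowers g') hy₁g'
      have h4 : y₁ ∈ ncl G c := by
        rw [h2]
        exact h3
      have h5 : ncl G y₁ = ncl G c := key_ii c y₁ hc1 h4 hy₁1
      have h6 : y₁ ∈ ncl G g := by
        rw [hncl₁]
        exact hy₁s₁
      have h7 : ncl G y₁ = ncl G g := key_ii g y₁ hg1 h6 hy₁1
      have h8 : g ∈ ncl G g := mem_ncl_self g
      rw [← h7, h5, hncl₀] at h8
      exact hg h8

end Core

/-- For a finite non-cyclic nilpotent group `G`, the enhanced power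
graph is minimally edge connected iff `G` is a `p`-group of exponent `p` for some
prime `p`. -/
theorem stmt_3 (G : Type*) [Group G] [Fintype G] (hnil : Group.IsNilpotent G)
    (hnc : ¬ IsCyclic G) :
    MinEdgeConnected (enhancedPowerGraph G) ↔
      ∃ p : ℕ, p.Prime ∧ (∃ n : ℕ, Nat.card G = p ^ n) ∧ Monoid.exponent G = p := by
  constructor
  · -- forward direction (by contradiction through gt_core)
    intro hmin
    by_contra hne
    have hnontriv : Nontrivial G := by
      by_contra h
      rw [not_nontrivial_iff_subsingleton] at h
      exact hnc isCyclic_of_subsingleton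
    have huniv : ∀ w : G, w ≠ 1 → (enhancedPowerGraph G).Adj 1 w :=
      fun w hw => epg_adj_one hw
    have hy : ∃ y : G, y ≠ 1 ∧
        minDeg (enhancedPowerGraph G) + 1 ≤ gDeg (enhancedPowerGraph G) y := by
      by_contra h2
      push_neg at h2
      apply hne
      apply gt_core hnil hnc
      intro y hy1
      have h3 := h2 y hy1
      have h4 := aux_minDeg_le (enhancedPowerGraph G) y
      omega
    obtain ⟨y, hy1, hdy⟩ := hy
    have he : s((1 : G), y) ∈ (enhancedPowerGraph G).edgeSet :=
      (enhancedPowerGraph G).mem_edgeSet.mpr (epg_adj_one hy1)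
    have h1 := hmin _ he
    have h2 : edgeConn (enhancedPowerGraph G) = minDeg (enhancedPowerGraph G) :=
      aux_edgeConn_eq _ 1 huniv
    have h3 : edgeConn ((enhancedPowerGraph G).deleteEdges {s((1 : G), y)}) =
        minDeg (enhancedPowerGraph G) :=
      aux_edgeConn_delete_eq _ 1 y huniv hy1 hdy
    have h4 : 1 ≤ minDeg (enhancedPowerGraph G) := by
      have hmem : minDeg (enhancedPowerGraph G) ∈ Set.range (gDeg (enhancedPowerGraph G)) :=
        Nat.sInf_mem (Set.range_nonempty _)
      obtain ⟨x₀, hx₀⟩ := hmem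
      have h5 : ((enhancedPowerGraph G).neighborSet x₀).Nonempty := by
        by_cases hx : x₀ = 1
        · obtain ⟨w, hw⟩ := exists_ne (1 : G)
          refine ⟨w, ?_⟩
          rw [SimpleGraph.mem_neighborSet, hx]
          exact huniv w hw
        · refine ⟨1, ?_⟩
          rw [SimpleGraph.mem_neighborSet]
          exact (huniv x₀ hx).symm
      have h6 := (Set.ncard_pos (Set.toFinite _)).mpr h5
      rw [gDeg] at hx₀
      omega
    rw [h2, h3] at h1
    omega
  · rintro ⟨p, hp, ⟨n, hcard⟩, hexp⟩
    exact backward_direction hp hexp hnc
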